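/- For every R > 0, the Assouad dimension of the space ℰℋ_{[0,R]}^{<ω} of isometry classes of nonempty finite subsets of [0,R], endowed with the Euclidean–Hausdorff distance, is infinite: for every α > 0 and every C > 0 there exist r > 0, β ∈ (0,1], and a nonempty finite subset A ⊆ [0,R] such that the open d_EH-ball of radius r centred at A cannot be covered by fewer than C·β^{−α} open d_EH-balls of radius at most β·r. -/

import Mathlib

open Metric

/-- The Euclidean–Hausdorff distance between two subsets of `ℝ`: the infimum over
surjective isometries `f : ℝ → ℝ` of the Hausdorff distance `d_H(A, f(B))`. -/
noncomputable def dEH (A B : Set ℝ) : ℝ :=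
  sInf {d : ℝ | ∃ f : ℝ → ℝ, Isometry f ∧ Function.Surjective f ∧
    d = hausdorffDist A (f '' B)}

lemma dEH_set_nonempty (A B : Set ℝ) :
    {d : ℝ | ∃ f : ℝ → ℝ, Isometry f ∧ Function.Surjective f ∧
      d = hausdorffDist A (f '' B)}.Nonempty :=
  ⟨hausdorffDist A B, id, isometry_id, Function.surjective_id, by simp⟩

lemma dEH_set_bddBelow (A B : Set ℝ) :
    BddBelow {d : ℝ | ∃ f : ℝ → ℝ, Isometry f ∧ Function.Surjective f ∧
      d = hausdorffDist A (f '' B)} :=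
  ⟨0, by rintro d ⟨f, -, -, rfl⟩; exact hausdorffDist_nonneg⟩

lemma dEH_le (A B : Set ℝ) : dEH A B ≤ hausdorffDist A B :=
  csInf_le (dEH_set_bddBelow A B) ⟨id, isometry_id, Function.surjective_id, by simp⟩

lemma exists_of_dEH_lt {A B : Set ℝ} {ρ : ℝ} (h : dEH A B < ρ) :
    ∃ f : ℝ → ℝ, Isometry f ∧ hausdorffDist A (f '' B) < ρ := by
  obtain ⟨d, ⟨f, hf, -, rfl⟩, hd⟩ := exists_lt_of_csInf_lt (dEH_set_nonempty A B) h
  exact ⟨f, hf, hd⟩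

lemma isometry_affine {f : ℝ → ℝ} (hf : Isometry f) :
    ∃ a e : ℝ, e ^ 2 = 1 ∧ ∀ x, f x = a + e * x := by
  have hd : ∀ x y : ℝ, (f x - f y) ^ 2 = (x - y) ^ 2 := by
    intro x y
    have h := hf.dist_eq x y
    rw [Real.dist_eq, Real.dist_eq] at h
    have := congrArg (· ^ 2) h
    simpa [sq_abs] using this
  have he : (f 1 - f 0) ^ 2 = 1 := by have := hd 1 0; nlinarith
  refine ⟨f 0, f 1 - f 0, he, fun x => ?_⟩
  have h1 := hd x 0
  have h2 := hd x 1
  have hue : (f x - f 0) * (f 1 - f 0) = x := by nlinarith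
  linear_combination (f 1 - f 0) * hue - (f x - f 0) * he

lemma close_pair {S T c : Set ℝ} (hSf : S.Finite) (hSn : S.Nonempty)
    (hTf : T.Finite) (hTn : T.Nonempty) (hcf : c.Finite) (hcn : c.Nonempty) {ρ : ℝ}
    (h1 : dEH c S < ρ) (h2 : dEH c T < ρ) :
    ∃ a e : ℝ, e ^ 2 = 1 ∧ hausdorffDist S ((fun x => a + e * x) '' T) < 2 * ρ := by
  obtain ⟨f, hf, hfd⟩ := exists_of_dEH_lt h1
  obtain ⟨g, hg, hgd⟩ := exists_of_dEH_lt h2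
  obtain ⟨a₁, e₁, he₁, hfa⟩ := isometry_affine hf
  obtain ⟨a₂, e₂, he₂, hga⟩ := isometry_affine hg
  refine ⟨e₁ * (a₂ - a₁), e₁ * e₂, by nlinarith, ?_⟩
  have hcomp : ∀ x : ℝ, f (e₁ * (a₂ - a₁) + e₁ * e₂ * x) = g x := by
    intro x
    rw [hfa, hga]
    linear_combination (a₂ - a₁ + e₂ * x) * he₁
  have himg : f '' ((fun x => e₁ * (a₂ - a₁) + e₁ * e₂ * x) '' T) = g '' T := by
    rw [← Set.image_comp]
    exact Set.image_congr (fun x _ => hcomp x)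
  have key : hausdorffDist S ((fun x => e₁ * (a₂ - a₁) + e₁ * e₂ * x) '' T)
      = hausdorffDist (f '' S) (g '' T) := by
    rw [← himg, hausdorffDist_image hf]
  rw [key]
  have fin1 : EMetric.hausdorffEdist (f '' S) c ≠ ⊤ :=
    hausdorffEdist_ne_top_of_nonempty_of_bounded (hSn.image f) hcn
      ((hSf.image f).isBounded) (hcf.isBounded)
  calc hausdorffDist (f '' S) (g '' T)
      ≤ hausdorffDist (f '' S) c + hausdorffDist c (g '' T) :=
        hausdorffDist_triangle fin1
    _ < ρ + ρ := by
        have h' : hausdorffDist (f '' S) c < ρ := by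
          rw [hausdorffDist_comm]; exact hfd
        exact add_lt_add h' hgd
    _ = 2 * ρ := by ring


lemma nat_eq_of_abs_lt {i j : ℕ} (h1 : (i:ℝ) < (j:ℝ) + 1) (h2 : (j:ℝ) < (i:ℝ) + 1) : i = j := by
  have a1 : i < j + 1 := by exact_mod_cast h1
  have a2 : j < i + 1 := by exact_mod_cast h2
  omega

lemma idx_le {m : ℕ} (hm : 4 ≤ m) {X : Finset ℕ} (hX : X ⊆ Finset.Icc 2 (m-2)) {i : ℕ}
    (hi : i ∈ insert 0 (insert 1 (insert m X))) : i ≤ m := by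
  simp only [Finset.mem_insert] at hi
  rcases hi with rfl | rfl | rfl | hi
  · omega
  · omega
  · omega
  · have := Finset.mem_Icc.1 (hX hi); omega

lemma sep (m : ℕ) (hm : 4 ≤ m) (ε : ℝ) (hε : 0 < ε)
    (X Y : Finset ℕ) (hX : X ⊆ Finset.Icc 2 (m-2)) (hY : Y ⊆ Finset.Icc 2 (m-2))
    (a e : ℝ) (he : e ^ 2 = 1)
    (h : hausdorffDist ((fun i : ℕ => (i:ℝ) * ε) '' ↑(insert 0 (insert 1 (insert m X))))
          ((fun x => a + e * x) '' ((fun i : ℕ => (i:ℝ) * ε) '' ↑(insert 0 (insert 1 (insert m Y))))) < ε / 2) :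
    X = Y := by
  set SX : Finset ℕ := insert 0 (insert 1 (insert m X)) with hSXdef
  set SY : Finset ℕ := insert 0 (insert 1 (insert m Y)) with hSYdef
  set U : Set ℝ := (fun i : ℕ => (i:ℝ) * ε) '' ↑SX with hU
  set V : Set ℝ := (fun x => a + e * x) '' ((fun i : ℕ => (i:ℝ) * ε) '' ↑SY) with hV
  have hUfin : U.Finite := (SX.finite_toSet.image _)
  have hVfin : V.Finite := ((SY.finite_toSet.image _).image _)
  have hUn : U.Nonempty := ⟨0, ⟨0, by simp [hSXdef], by simp⟩⟩
  have hVn : V.Nonempty :=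
    (Set.image_nonempty ..).2 ((Set.image_nonempty ..).2 ⟨0, by simp [hSYdef]⟩)
  have hfin : EMetric.hausdorffEdist U V ≠ ⊤ :=
    hausdorffEdist_ne_top_of_nonempty_of_bounded hUn hVn hUfin.isBounded hVfin.isBounded
  have hfwd : ∀ i ∈ SX, ∃ j ∈ SY, |(i:ℝ) * ε - (a + e * ((j:ℝ) * ε))| < ε / 2 := by
    intro i hi
    have hmemU : ((i:ℝ) * ε) ∈ U := ⟨i, by simpa using hi, rfl⟩
    obtain ⟨y, hy, hxy⟩ := exists_dist_lt_of_hausdorffDist_lt hmemU h hfin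
    simp only [hV, Set.mem_image, Finset.mem_coe, exists_exists_and_eq_and] at hy
    obtain ⟨j, hj, rfl⟩ := hy
    exact ⟨j, hj, by simpa [Real.dist_eq] using hxy⟩
  have hbwd : ∀ j ∈ SY, ∃ i ∈ SX, |(i:ℝ) * ε - (a + e * ((j:ℝ) * ε))| < ε / 2 := by
    intro j hj
    have hmemV : (a + e * ((j:ℝ) * ε)) ∈ V := ⟨(j:ℝ) * ε, ⟨j, by simpa using hj, rfl⟩, rfl⟩
    obtain ⟨x, hx, hxy⟩ := exists_dist_lt_of_hausdorffDist_lt' hmemV h hfin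
    obtain ⟨i, hi, rfl⟩ := hx
    exact ⟨i, by simpa using hi, by simpa [Real.dist_eq] using hxy⟩
  have h0X : (0:ℕ) ∈ SX := by simp [hSXdef]
  have h1X : (1:ℕ) ∈ SX := by simp [hSXdef]
  have hmX : m ∈ SX := by simp [hSXdef]
  have h0Y : (0:ℕ) ∈ SY := by simp [hSYdef]
  have hmY : m ∈ SY := by simp [hSYdef]
  have he' : e = 1 ∨ e = -1 := by
    have : (e - 1) * (e + 1) = 0 := by nlinarith
    rcases mul_eq_zero.1 this with h' | h'
    · left; linarith
    · right; linarith
  rcases he' with rfl | rfl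
  · -- translation case
    obtain ⟨j₀, hj₀, hb0⟩ := hfwd 0 h0X
    obtain ⟨i₀, hi₀, hb1⟩ := hbwd 0 h0Y
    rw [abs_lt] at hb0 hb1
    push_cast at hb0 hb1
    have hj₀nn : (0:ℝ) ≤ (j₀:ℝ) * ε := mul_nonneg (Nat.cast_nonneg _) hε.le
    have hi₀nn : (0:ℝ) ≤ (i₀:ℝ) * ε := mul_nonneg (Nat.cast_nonneg _) hε.le
    have ha1 : a < ε / 2 := by linarith [hb0.1]
    have ha2 : -(ε / 2) < a := by linarith [hb1.2]
    have main : ∀ i j : ℕ, |(i:ℝ) * ε - (a + 1 * ((j:ℝ) * ε))| < ε / 2 → i = j := by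
      intro i j hij
      rw [abs_lt] at hij
      apply nat_eq_of_abs_lt
      · have hx : ((i:ℝ) - ((j:ℝ) + 1)) * ε < 0 * ε := by
          have hq : ((i:ℝ) - ((j:ℝ) + 1)) * ε = (i:ℝ) * ε - (j:ℝ) * ε - ε := by ring
          rw [hq]; linarith [hij.2]
        have := (mul_lt_mul_iff_left₀ hε).1 hx
        linarith
      · have hx : ((j:ℝ) - ((i:ℝ) + 1)) * ε < 0 * ε := by
          have hq : ((j:ℝ) - ((i:ℝ) + 1)) * ε = (j:ℝ) * ε - (i:ℝ) * ε - ε := by ring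
          rw [hq]; linarith [hij.1]
        have := (mul_lt_mul_iff_left₀ hε).1 hx
        linarith
    have hsub1 : ∀ i ∈ SX, i ∈ SY := by
      intro i hi
      obtain ⟨j, hj, hij⟩ := hfwd i hi
      rwa [main i j hij]
    have hsub2 : ∀ j ∈ SY, j ∈ SX := by
      intro j hj
      obtain ⟨i, hi, hij⟩ := hbwd j hj
      rwa [← main i j hij]
    ext n
    constructor
    · intro hn
      have h1 := hsub1 n (by simp [hSXdef, hn])
      have h2 := Finset.mem_Icc.1 (hX hn)
      simp only [hSYdef, Finset.mem_insert] at h1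
      rcases h1 with rfl | rfl | rfl | h1
      · omega
      · omega
      · omega
      · exact h1
    · intro hn
      have h1 := hsub2 n (by simp [hSYdef, hn])
      have h2 := Finset.mem_Icc.1 (hY hn)
      simp only [hSXdef, Finset.mem_insert] at h1
      rcases h1 with rfl | rfl | rfl | h1
      · omega
      · omega
      · omega
      · exact h1
  · -- reflection case: contradiction
    exfalso
    obtain ⟨i₁, hi₁, hb1⟩ := hbwd 0 h0Y
    obtain ⟨j₁, hj₁, hb2⟩ := hfwd m hmX
    obtain ⟨j, hj, hb3⟩ := hfwd 1 h1X
    rw [abs_lt] at hb1 hb2 hb3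
    push_cast at hb1 hb2 hb3
    have hi₁m : (i₁:ℝ) * ε ≤ (m:ℝ) * ε :=
      mul_le_mul_of_nonneg_right (Nat.cast_le.2 (idx_le hm hX hi₁)) hε.le
    have hj₁nn : (0:ℝ) ≤ (j₁:ℝ) * ε := mul_nonneg (Nat.cast_nonneg _) hε.le
    have hup : a < (m:ℝ) * ε + ε / 2 := by linarith [hb1.1]
    have hlo : (m:ℝ) * ε - ε / 2 < a := by linarith [hb2.2]
    have hjm : j + 1 = m := by
      apply nat_eq_of_abs_lt <;> push_cast
      · have hx : ((j:ℝ) + 1 - ((m:ℝ) + 1)) * ε < 0 * ε := by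
          have hq : ((j:ℝ) + 1 - ((m:ℝ) + 1)) * ε = (j:ℝ) * ε + ε - (m:ℝ) * ε - ε := by ring
          rw [hq]; linarith [hb3.2]
        have := (mul_lt_mul_iff_left₀ hε).1 hx
        linarith
      · have hx : ((m:ℝ) - ((j:ℝ) + 1 + 1)) * ε < 0 * ε := by
          have hq : ((m:ℝ) - ((j:ℝ) + 1 + 1)) * ε = (m:ℝ) * ε - (j:ℝ) * ε - ε - ε := by ring
          rw [hq]; linarith [hb3.1]
        have := (mul_lt_mul_iff_left₀ hε).1 hx
        linarith
    simp only [hSYdef, Finset.mem_insert] at hj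
    rcases hj with rfl | rfl | rfl | hj
    · omega
    · omega
    · omega
    · have := Finset.mem_Icc.1 (hY hj); omega


lemma exists_t (a b : ℕ) : ∃ t : ℕ, 2 ≤ t ∧ a * t + b ≤ 2 ^ t := by
  refine ⟨4 * (a + b + 3), by omega, ?_⟩
  set n := a + b + 3 with hn
  have h2 : n < 2 ^ n := Nat.lt_two_pow_self (n := n)
  have h4 : n ^ 4 ≤ (2 ^ n) ^ 4 := Nat.pow_le_pow_left h2.le 4
  have hpow : 2 ^ (4 * n) = (2 ^ n) ^ 4 := by rw [← pow_mul, Nat.mul_comm]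
  have ha : a ≤ n := by omega
  have hb : b ≤ n := by omega
  have h3 : 3 ≤ n := by omega
  calc a * (4 * n) + b ≤ n * (4 * n) + n := by
        exact Nat.add_le_add (Nat.mul_le_mul_right _ ha) hb
    _ ≤ n ^ 4 := by
        have hn2 : 9 ≤ n ^ 2 := by nlinarith
        have hnn : n ≤ n ^ 2 := by nlinarith
        calc n * (4 * n) + n = 4 * n ^ 2 + n := by ring
          _ ≤ 4 * n ^ 2 + n ^ 2 := by omega
          _ = 5 * n ^ 2 := by ring
          _ ≤ n ^ 2 * n ^ 2 := Nat.mul_le_mul_right _ (by omega)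
          _ = n ^ 4 := by ring
    _ ≤ (2 ^ n) ^ 4 := h4
    _ = 2 ^ (4 * n) := hpow.symm


set_option maxHeartbeats 1000000 in
/-- The Assouad dimension of `ℰℋ_{[0,R]}^{<ω}` (nonempty finite subsets of `[0,R]` with the
Euclidean–Hausdorff distance) is infinite: for every `α > 0` and `C > 0` there are `r > 0`,
`β ∈ (0,1]`, and a nonempty finite `A ⊆ [0,R]`, such that any covering of the open
`d_EH`-ball of radius `r` centred at `A` by open `d_EH`-balls of radii at most `β r` uses
at least `C β^{-α}` balls. -/
theorem assouad_dim_EH_bounded_infinite (R : ℝ) (hR : 0 < R) :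
    ∀ α : ℝ, 0 < α → ∀ C : ℝ, 0 < C →
      ∃ r : ℝ, 0 < r ∧ ∃ β : ℝ, β ∈ Set.Ioc (0 : ℝ) 1 ∧
        ∃ A : {A : Set ℝ // A.Finite ∧ A.Nonempty ∧ A ⊆ Set.Icc 0 R},
          ∀ (k : ℕ) (c : Fin k → {A : Set ℝ // A.Finite ∧ A.Nonempty ∧ A ⊆ Set.Icc 0 R})
            (ρ : Fin k → ℝ), (∀ i, ρ i ≤ β * r) →
            ({B : {A : Set ℝ // A.Finite ∧ A.Nonempty ∧ A ⊆ Set.Icc 0 R} |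
                dEH A.val B.val < r} ⊆
              ⋃ i : Fin k, {B : {A : Set ℝ // A.Finite ∧ A.Nonempty ∧ A ⊆ Set.Icc 0 R} |
                dEH (c i).val B.val < ρ i}) →
            C * β ^ (-α) ≤ (k : ℝ) := by
  intro α hα C hC
  obtain ⟨t, ht2, ht⟩ := exists_t ⌈α⌉₊ (⌈C⌉₊ + 3 * ⌈α⌉₊ + 3)
  set p := ⌈α⌉₊ with hp
  set N := ⌈C⌉₊ with hN
  set m := 2 ^ t with hmdef
  have hm4 : 4 ≤ m := by
    calc 4 = 2 ^ 2 := rfl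
      _ ≤ 2 ^ t := Nat.pow_le_pow_right (by norm_num) ht2
  have hmR : (0:ℝ) < (m:ℝ) := by
    have : 0 < m := by omega
    exact_mod_cast this
  have hm4R : (4:ℝ) ≤ (m:ℝ) := by exact_mod_cast hm4
  set ε : ℝ := R / m with hεdef
  have hεpos : 0 < ε := div_pos hR hmR
  set Aelt : {A : Set ℝ // A.Finite ∧ A.Nonempty ∧ A ⊆ Set.Icc 0 R} :=
    ⟨{0}, Set.finite_singleton 0, ⟨0, rfl⟩,
      Set.singleton_subset_iff.2 ⟨le_rfl, hR.le⟩⟩ with hAelt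
  refine ⟨2 * R, by linarith, 1 / (8 * (m:ℝ)), ⟨by positivity, ?_⟩, Aelt, ?_⟩
  · rw [div_le_one (by positivity)]; linarith
  intro k c ρ hρ hcov
  -- the family of candidate sets
  set SET : Finset ℕ → Set ℝ :=
    fun X => (fun i : ℕ => (i:ℝ) * ε) '' ↑(insert 0 (insert 1 (insert m X))) with hSET
  have hSETfin : ∀ X : Finset ℕ, (SET X).Finite :=
    fun X => (Finset.finite_toSet _).image _
  have hSETne : ∀ X : Finset ℕ, (SET X).Nonempty :=
    fun X => ⟨0, 0, by simp, by simp⟩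
  have hSETsub : ∀ X : Finset ℕ, X ⊆ Finset.Icc 2 (m-2) → SET X ⊆ Set.Icc 0 R := by
    intro X hX x hx
    obtain ⟨i, hi, rfl⟩ := hx
    have him : i ≤ m := idx_le hm4 hX (by simpa using hi)
    have himR : (i:ℝ) ≤ (m:ℝ) := by exact_mod_cast him
    constructor
    · positivity
    · have hle : (i:ℝ) * ε ≤ (m:ℝ) * ε := mul_le_mul_of_nonneg_right himR hεpos.le
      have heq : (m:ℝ) * ε = R := by
        rw [hεdef]; field_simp
      show (i:ℝ) * ε ≤ R
      linarith
  have hball : ∀ X : Finset ℕ, X ⊆ Finset.Icc 2 (m-2) → dEH {0} (SET X) < 2 * R := by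
    intro X hX
    have h1 : dEH {0} (SET X) ≤ hausdorffDist {0} (SET X) := dEH_le _ _
    have h2 : hausdorffDist {0} (SET X) ≤ R := by
      apply hausdorffDist_le_of_mem_dist hR.le
      · intro x hx
        rcases hx with rfl
        exact ⟨0, ⟨0, by simp, by simp⟩, by simp [hR.le]⟩
      · intro y hy
        have hyIcc := hSETsub X hX hy
        exact ⟨0, rfl, by
          rw [Real.dist_eq, abs_of_nonneg (by linarith [hyIcc.1])]
          linarith [hyIcc.2]⟩
    linarith
  -- k is positive
  have hA0 : dEH ({0} : Set ℝ) {0} < 2 * R := by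
    have := dEH_le ({0} : Set ℝ) {0}
    rw [hausdorffDist_self_zero] at this
    linarith
  have hA0' : Aelt ∈ {B : {A : Set ℝ // A.Finite ∧ A.Nonempty ∧ A ⊆ Set.Icc 0 R} |
      dEH Aelt.val B.val < 2 * R} := hA0
  have hAmem := hcov hA0'
  obtain ⟨i0, hi0⟩ := Set.mem_iUnion.1 hAmem
  haveI : Nonempty (Fin k) := ⟨i0⟩
  -- the subtype elements
  have hSUBmem : ∀ X (hX : X ⊆ Finset.Icc 2 (m-2)),
      (⟨SET X, hSETfin X, hSETne X, hSETsub X hX⟩ :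
        {A : Set ℝ // A.Finite ∧ A.Nonempty ∧ A ⊆ Set.Icc 0 R}) ∈
        ⋃ i : Fin k, {B : {A : Set ℝ // A.Finite ∧ A.Nonempty ∧ A ⊆ Set.Icc 0 R} |
          dEH (c i).val B.val < ρ i} :=
    fun X hX => hcov (hball X hX)
  classical
  have hex : ∀ X : Finset ℕ, ∃ i : Fin k,
      X ⊆ Finset.Icc 2 (m-2) → dEH (c i).val (SET X) < ρ i := by
    intro X
    by_cases hX : X ⊆ Finset.Icc 2 (m-2)
    · obtain ⟨i, hi⟩ := Set.mem_iUnion.1 (hSUBmem X hX)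
      exact ⟨i, fun _ => hi⟩
    · exact ⟨Classical.arbitrary _, fun h => absurd h hX⟩
  choose F hFspec using hex
  -- injectivity
  have hinj : Set.InjOn F ↑((Finset.Icc 2 (m-2)).powerset) := by
    intro X hXp Y hYp hFeq
    have hX : X ⊆ Finset.Icc 2 (m-2) := Finset.mem_powerset.1 (Finset.mem_coe.1 hXp)
    have hY : Y ⊆ Finset.Icc 2 (m-2) := Finset.mem_powerset.1 (Finset.mem_coe.1 hYp)
    have d1 : dEH (c (F X)).val (SET X) < ρ (F X) := hFspec X hX
    have d2 : dEH (c (F X)).val (SET Y) < ρ (F X) := by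
      have := hFspec Y hY
      rwa [← hFeq] at this
    obtain ⟨a, e, he, hd⟩ := close_pair (hSETfin X) (hSETne X) (hSETfin Y) (hSETne Y)
      (c (F X)).2.1 (c (F X)).2.2.1 d1 d2
    have hρle : 2 * ρ (F X) ≤ ε / 2 := by
      have h1 := hρ (F X)
      have key : 2 * (1 / (8 * (m:ℝ)) * (2 * R)) = ε / 2 := by
        rw [hεdef]; field_simp; ring
      linarith
    have hd2 : hausdorffDist (SET X) ((fun x => a + e * x) '' SET Y) < ε / 2 :=
      lt_of_lt_of_le hd hρle
    exact sep m hm4 ε hεpos X Y hX hY a e he hd2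
  -- cardinality
  have hcard : (Finset.Icc 2 (m-2)).powerset.card ≤ k := by
    have h := Finset.card_le_card_of_injOn F (fun X _ => Finset.mem_univ (F X)) hinj
    simpa using h
  have hcard2 : (Finset.Icc 2 (m-2)).powerset.card = 2 ^ (m - 3) := by
    have hq : m - 2 + 1 - 2 = m - 3 := by omega
    rw [Finset.card_powerset, Nat.card_Icc, hq]
  have hk : (2:ℝ) ^ (m - 3) ≤ (k:ℝ) := by
    have : 2 ^ (m - 3) ≤ k := hcard2 ▸ hcard
    exact_mod_cast this
  -- the numeric chain
  have h8m0 : (0:ℝ) ≤ 8 * (m:ℝ) := by positivity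
  have h8m1 : (1:ℝ) ≤ 8 * (m:ℝ) := by linarith
  have hβval : (1 / (8 * (m:ℝ))) ^ (-α) = (8 * (m:ℝ)) ^ α := by
    rw [one_div, Real.inv_rpow h8m0, ← Real.rpow_neg h8m0, neg_neg]
  have step1 : (8 * (m:ℝ)) ^ α ≤ (8 * (m:ℝ)) ^ (p:ℕ) := by
    have := Real.rpow_le_rpow_of_exponent_le h8m1 (Nat.le_ceil α)
    rwa [Real.rpow_natCast] at this
  have hC2 : C ≤ (2:ℝ) ^ (N:ℕ) := by
    have h1 : C ≤ (N:ℝ) := Nat.le_ceil C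
    have h2 : (N:ℝ) ≤ (2:ℝ) ^ (N:ℕ) := by exact_mod_cast (Nat.lt_two_pow_self (n := N)).le
    linarith
  have hmul : C * (1 / (8 * (m:ℝ))) ^ (-α) ≤ (2:ℝ) ^ (N:ℕ) * (8 * (m:ℝ)) ^ (p:ℕ) := by
    rw [hβval]
    exact mul_le_mul hC2 step1 (Real.rpow_nonneg h8m0 α) (by positivity)
  have hprod : (2:ℝ) ^ (N:ℕ) * (8 * (m:ℝ)) ^ (p:ℕ) = 2 ^ (N + 3 * p + t * p) := by
    have hm' : (m:ℝ) = 2 ^ t := by rw [hmdef]; push_cast; ring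
    rw [hm', show (8:ℝ) * 2 ^ t = 2 ^ (3 + t) by rw [pow_add]; norm_num,
      ← pow_mul, ← pow_add]
    congr 1
    ring
  have hexp : N + 3 * p + t * p ≤ m - 3 := by
    have ht' := ht
    rw [Nat.mul_comm p t] at ht'
    omega
  have h2k : (2:ℝ) ^ (N + 3 * p + t * p) ≤ (2:ℝ) ^ (m - 3) :=
    pow_le_pow_right₀ (by norm_num) hexp
  calc C * (1 / (8 * (m:ℝ))) ^ (-α)
      ≤ (2:ℝ) ^ (N:ℕ) * (8 * (m:ℝ)) ^ (p:ℕ) := hmul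
    _ = 2 ^ (N + 3 * p + t * p) := hprod
    _ ≤ (2:ℝ) ^ (m - 3) := h2k
    _ ≤ (k:ℝ) := hk
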